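/- For every integer n ≥ 4, the total number of Sidon 4-sets in {1, ..., n} is exactly n³/12 - 3n²/8 + 5n/12 if n is even, and n³/12 - 3n²/8 + 5n/12 - 1/8 if n is odd. -/

import Mathlib

/-- `S` is a Sidon 4-set in `[1,n]`. -/
def IsSidonFourSet (n : ℕ) (S : Finset ℕ) : Prop :=
  (S : Set ℕ) ⊆ Set.Icc 1 n ∧
    ∃ x₁ x₂ x₃ x₄ : ℕ, S = {x₁, x₂, x₃, x₄} ∧
      x₁ ≠ x₂ ∧ x₁ ≠ x₃ ∧ x₁ ≠ x₄ ∧ x₂ ≠ x₃ ∧ x₂ ≠ x₄ ∧ x₃ ≠ x₄ ∧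
      x₁ + x₂ = x₃ + x₄

def sT (n : ℕ) : Finset (ℕ × ℕ × ℕ) :=
  ((Finset.Icc 1 n) ×ˢ (Finset.Icc 1 n) ×ˢ (Finset.Icc 1 n)).filter
    (fun p => p.2.1 < p.1 ∧ p.1 + p.2.2 < 2 * p.2.1)

lemma mem_sT {n : ℕ} {p : ℕ × ℕ × ℕ} :
    p ∈ sT n ↔ (1 ≤ p.1 ∧ p.1 ≤ n) ∧ (1 ≤ p.2.1 ∧ p.2.1 ≤ n) ∧ (1 ≤ p.2.2 ∧ p.2.2 ≤ n)
      ∧ p.2.1 < p.1 ∧ p.1 + p.2.2 < 2 * p.2.1 := by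
  simp [sT, Finset.mem_filter, Finset.mem_product, Finset.mem_Icc, and_assoc]

def sf (a : ℕ) : ℕ := ∑ i ∈ Finset.range (a - 1), (2 * (1 + i) - (a + 1))

lemma slice_card (n : ℕ) :
    ((sT (n+1)).filter (fun p => p.1 = n+1)).card = sf (n+1) := by
  have h : ((sT (n+1)).filter (fun p => p.1 = n+1)).card
      = ((Finset.Icc 1 n).sigma (fun b => Finset.Icc 1 (2*b - (n+2)))).card := by
    apply Finset.card_bij' (fun p _ => (⟨p.2.1, p.2.2⟩ : Σ _ : ℕ, ℕ))
      (fun q _ => ((n+1 : ℕ), q.1, q.2))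
    · intro p hp
      simp only [Finset.mem_filter] at hp
      obtain ⟨hp1, hp2⟩ := hp
      rw [mem_sT] at hp1
      simp only [Finset.mem_sigma, Finset.mem_Icc]
      omega
    · intro q hq
      obtain ⟨b, d⟩ := q
      simp only [Finset.mem_sigma, Finset.mem_Icc] at hq
      rw [Finset.mem_filter, mem_sT]
      refine ⟨?_, rfl⟩
      simp only
      omega
    · intro p hp
      simp only [Finset.mem_filter] at hp
      obtain ⟨p1, p2, p3⟩ := p
      simp_all
    · intro q hq; rfl
  rw [h, Finset.card_sigma]
  simp only [Nat.card_Icc, sf]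
  rw [← Finset.Ico_add_one_right_eq_Icc, Finset.sum_Ico_eq_sum_range]
  simp only [Nat.add_sub_cancel]

lemma sT_succ_card (n : ℕ) : (sT (n+1)).card = (sT n).card + sf (n+1) := by
  have hsplit := Finset.card_filter_add_card_filter_not
    (s := sT (n+1)) (p := fun p => p.1 = n+1)
  have hrest : (sT (n+1)).filter (fun p => ¬ p.1 = n+1) = sT n := by
    ext p
    simp only [Finset.mem_filter, mem_sT]
    omega
  rw [hrest] at hsplit
  rw [← slice_card n]
  omega

lemma sf_step (a : ℕ) : sf (a + 2) = sf a + (a - 1) := by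
  rcases Nat.eq_zero_or_pos a with rfl | ha
  · simp [sf]
  · obtain ⟨k, rfl⟩ := Nat.exists_eq_add_of_le ha
    -- a = 1 + k
    show ∑ i ∈ Finset.range (1 + k + 2 - 1), (2 * (1 + i) - (1 + k + 2 + 1)) = _
    have h1 : 1 + k + 2 - 1 = (k + 1) + 1 := by omega
    rw [h1, Finset.sum_range_succ']
    have h2 : ∀ i, 2 * (1 + (i+1)) - (1 + k + 2 + 1) = 2 * (1 + i) - (1 + k + 1) := by
      intro i; omega
    simp only [h2]
    have h3 : 2 * (1 + 0) - (1 + k + 2 + 1) = 0 := by omega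
    rw [h3, add_zero, Finset.sum_range_succ]
    have h4 : sf (1 + k) = ∑ i ∈ Finset.range k, (2 * (1 + i) - (1 + k + 1)) := by
      unfold sf
      have h0 : 1 + k - 1 = k := by omega
      rw [h0]
    rw [h4]
    omega

lemma sf_closed (a : ℕ) : sf a = (a - 2)^2 / 4 := by
  induction a using Nat.strong_induction_on with
  | _ a ih =>
    match a with
    | 0 => decide
    | 1 => decide
    | (k+2) =>
      rw [sf_step k, ih k (by omega)]
      rcases Nat.eq_zero_or_pos k with rfl | hk
      · decide
      · obtain ⟨m, rfl⟩ := Nat.exists_eq_add_of_le hk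
        have h1 : 1 + m + 2 - 2 = m + 1 := by omega
        have h2 : 1 + m - 2 = m - 1 := by omega
        rw [h1, h2]
        rcases Nat.eq_zero_or_pos m with rfl | hm
        · decide
        · obtain ⟨j, rfl⟩ := Nat.exists_eq_add_of_le hm
          have h3 : 1 + j - 1 = j := by omega
          rw [h3]
          have h4 : (1 + j + 1)^2 = j^2 + 4*(j+1) := by ring
          rw [h4]
          omega

set_option maxHeartbeats 1000000 in
lemma count_sT (n : ℕ) : 24 * (sT n).card + 9*n^2 + 3*(n % 2) = 2*n^3 + 10*n := by
  induction n using Nat.strong_induction_on with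
  | _ n ih =>
    match n with
    | 0 => decide
    | 1 => decide
    | 2 => decide
    | 3 => decide
    | (k+4) =>
      have h1 : (sT (k+4)).card = (sT (k+3)).card + sf (k+4) := sT_succ_card (k+3)
      have h2 : (sT (k+3)).card = (sT (k+2)).card + sf (k+3) := sT_succ_card (k+2)
      have hIH := ih (k+2) (by omega)
      have hf1 : sf (k+3) = (k+1)^2/4 := by
        rw [sf_closed]
        congr 2
      have hf2 : sf (k+4) = (k+2)^2/4 := by
        rw [sf_closed]
        congr 2
      rcases Nat.even_or_odd k with ⟨m, rfl⟩ | ⟨m, rfl⟩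
      · have e1 : (m+m+1)^2 = 4*(m^2+m) + 1 := by ring
        have e2 : (m+m+2)^2 = 4*m^2+8*m+4 := by ring
        have e3 : (m+m+2)^3 = 8*m^3+24*m^2+24*m+8 := by ring
        have e4 : (m+m+4)^3 = 8*m^3+48*m^2+96*m+64 := by ring
        have e5 : (m+m+4)^2 = 4*m^2+16*m+16 := by ring
        omega
      · have e1 : (2*m+1+1)^2 = 4*(m^2+2*m+1) := by ring
        have e2 : (2*m+1+2)^2 = 4*(m^2+3*m+2)+1 := by ring
        have e3 : (2*m+1+2)^3 = 8*m^3+36*m^2+54*m+27 := by ring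
        have e4 : (2*m+1+4)^3 = 8*m^3+60*m^2+150*m+125 := by ring
        have e5 : (2*m+1+4)^2 = 4*m^2+20*m+25 := by ring
        omega

def eMap (p : ℕ × ℕ × ℕ) : Finset ℕ := {p.1, p.2.1, p.1 + p.2.2 - p.2.1, p.2.2}

lemma order4 (x₁ x₂ x₃ x₄ : ℕ) (h12 : x₁ ≠ x₂) (h13 : x₁ ≠ x₃) (h14 : x₁ ≠ x₄)
    (h23 : x₂ ≠ x₃) (h24 : x₂ ≠ x₄) (h34 : x₃ ≠ x₄) (hsum : x₁ + x₂ = x₃ + x₄) :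
    ∃ a b d : ℕ, b < a ∧ a + d < 2 * b ∧
      eMap (a, b, d) = {x₁, x₂, x₃, x₄} ∧ a + d = x₁ + x₂ ∧
      (a = x₁ ∨ a = x₂ ∨ a = x₃ ∨ a = x₄) ∧ (b = x₁ ∨ b = x₂ ∨ b = x₃ ∨ b = x₄) ∧
      (d = x₁ ∨ d = x₂ ∨ d = x₃ ∨ d = x₄) := by
  rcases le_or_gt x₁ x₂ with h1 | h1
  · rcases le_or_gt x₃ x₄ with h2 | h2
    · rcases le_or_gt x₂ x₄ with h3 | h3
      · refine ⟨x₄, x₂, x₃, by omega, by omega, ?_, by omega, by tauto, by tauto, by tauto⟩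
        have hc : x₄ + x₃ - x₂ = x₁ := by omega
        simp only [eMap, hc]
        ext y; simp only [Finset.mem_insert, Finset.mem_singleton]; omega
      · refine ⟨x₂, x₄, x₁, by omega, by omega, ?_, by omega, by tauto, by tauto, by tauto⟩
        have hc : x₂ + x₁ - x₄ = x₃ := by omega
        simp only [eMap, hc]
        ext y; simp only [Finset.mem_insert, Finset.mem_singleton]; omega
    · rcases le_or_gt x₂ x₃ with h3 | h3
      · refine ⟨x₃, x₂, x₄, by omega, by omega, ?_, by omega, by tauto, by tauto, by tauto⟩
        have hc : x₃ + x₄ - x₂ = x₁ := by omega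
        simp only [eMap, hc]
        ext y; simp only [Finset.mem_insert, Finset.mem_singleton]; omega
      · refine ⟨x₂, x₃, x₁, by omega, by omega, ?_, by omega, by tauto, by tauto, by tauto⟩
        have hc : x₂ + x₁ - x₃ = x₄ := by omega
        simp only [eMap, hc]
        ext y; simp only [Finset.mem_insert, Finset.mem_singleton]; omega
  · rcases le_or_gt x₃ x₄ with h2 | h2
    · rcases le_or_gt x₁ x₄ with h3 | h3
      · refine ⟨x₄, x₁, x₃, by omega, by omega, ?_, by omega, by tauto, by tauto, by tauto⟩
        have hc : x₄ + x₃ - x₁ = x₂ := by omega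
        simp only [eMap, hc]
        ext y; simp only [Finset.mem_insert, Finset.mem_singleton]; omega
      · refine ⟨x₁, x₄, x₂, by omega, by omega, ?_, by omega, by tauto, by tauto, by tauto⟩
        have hc : x₁ + x₂ - x₄ = x₃ := by omega
        simp only [eMap, hc]
        ext y; simp only [Finset.mem_insert, Finset.mem_singleton]; omega
    · rcases le_or_gt x₁ x₃ with h3 | h3
      · refine ⟨x₃, x₁, x₄, by omega, by omega, ?_, by omega, by tauto, by tauto, by tauto⟩
        have hc : x₃ + x₄ - x₁ = x₂ := by omega
        simp only [eMap, hc]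
        ext y; simp only [Finset.mem_insert, Finset.mem_singleton]; omega
      · refine ⟨x₁, x₃, x₂, by omega, by omega, ?_, by omega, by tauto, by tauto, by tauto⟩
        have hc : x₁ + x₂ - x₃ = x₄ := by omega
        simp only [eMap, hc]
        ext y; simp only [Finset.mem_insert, Finset.mem_singleton]; omega

lemma sidon_set_eq (n : ℕ) :
    {S : Finset ℕ | IsSidonFourSet n S} = eMap '' (↑(sT n) : Set (ℕ × ℕ × ℕ)) := by
  ext S
  simp only [Set.mem_setOf_eq, Set.mem_image, Finset.mem_coe]
  constructor
  · rintro ⟨hsub, x₁, x₂, x₃, x₄, hS, h12, h13, h14, h23, h24, h34, hsum⟩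
    obtain ⟨a, b, d, hba, hadb, hset, hsum', ha, hb, hd⟩ :=
      order4 x₁ x₂ x₃ x₄ h12 h13 h14 h23 h24 h34 hsum
    refine ⟨(a, b, d), ?_, by rw [hset, hS]⟩
    have hmem : ∀ y ∈ S, 1 ≤ y ∧ y ≤ n := by
      intro y hy
      have := hsub hy
      simpa [Set.mem_Icc] using this
    have hx1 : x₁ ∈ S := by rw [hS]; simp
    have hx2 : x₂ ∈ S := by rw [hS]; simp
    have hx3 : x₃ ∈ S := by rw [hS]; simp
    have hx4 : x₄ ∈ S := by rw [hS]; simp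
    have b1 := hmem _ hx1; have b2 := hmem _ hx2
    have b3 := hmem _ hx3; have b4 := hmem _ hx4
    rw [mem_sT]
    dsimp only
    refine ⟨?_, ?_, ?_, hba, hadb⟩ <;> omega
  · rintro ⟨⟨a, b, d⟩, hp, rfl⟩
    rw [mem_sT] at hp
    simp only at hp
    obtain ⟨⟨ha1, ha2⟩, ⟨hb1, hb2⟩, ⟨hd1, hd2⟩, hba, hadb⟩ := hp
    constructor
    · intro y hy
      simp only [eMap, Finset.coe_insert, Set.mem_insert_iff, Finset.coe_singleton,
        Set.mem_singleton_iff] at hy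
      simp only [Set.mem_Icc]
      omega
    · refine ⟨a, d, b, a + d - b, ?_, by omega, by omega, by omega, by omega, by omega, by omega, by omega⟩
      ext y
      simp only [eMap, Finset.mem_insert, Finset.mem_singleton]
      omega

lemma sidon_ncard (n : ℕ) :
    {S : Finset ℕ | IsSidonFourSet n S}.ncard = (sT n).card := by
  rw [sidon_set_eq n, Set.ncard_image_of_injOn, Set.ncard_coe_finset]
  intro p hp q hq hpq
  simp only [Finset.mem_coe, mem_sT] at hp hq
  obtain ⟨a, b, d⟩ := p
  obtain ⟨a', b', d'⟩ := q
  simp only at hp hq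
  have hmem : ∀ y, y ∈ eMap (a, b, d) ↔ y ∈ eMap (a', b', d') := by
    intro y; rw [hpq]
  simp only [eMap, Finset.mem_insert, Finset.mem_singleton] at hmem
  have m1 := hmem a
  have m2 := hmem b
  have m3 := hmem d
  have m4 := hmem (a + d - b)
  have m5 := hmem a'
  have m6 := hmem b'
  have m7 := hmem d'
  have m8 := hmem (a' + d' - b')
  simp only [Prod.mk.injEq]
  refine ⟨by omega, by omega, by omega⟩

theorem stmt_16 (n : ℕ) (hn : 4 ≤ n) :
    (Even n →
      (({S : Finset ℕ | IsSidonFourSet n S}.ncard : ℚ)) =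
        (n : ℚ) ^ 3 / 12 - 3 * (n : ℚ) ^ 2 / 8 + 5 * (n : ℚ) / 12) ∧
    (Odd n →
      (({S : Finset ℕ | IsSidonFourSet n S}.ncard : ℚ)) =
        (n : ℚ) ^ 3 / 12 - 3 * (n : ℚ) ^ 2 / 8 + 5 * (n : ℚ) / 12 - 1 / 8) := by
  have hcard := sidon_ncard n
  have hcount := count_sT n
  rw [hcard]
  constructor
  · intro he
    have h2 : n % 2 = 0 := Nat.even_iff.mp he
    rw [h2] at hcount
    have hq : 24 * ((sT n).card : ℚ) + 9 * (n : ℚ)^2 + 3 * 0 = 2 * (n : ℚ)^3 + 10 * (n : ℚ) := by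
      exact_mod_cast congrArg (fun x : ℕ => (x : ℚ)) hcount
    linarith
  · intro ho
    have h2 : n % 2 = 1 := Nat.odd_iff.mp ho
    rw [h2] at hcount
    have hq : 24 * ((sT n).card : ℚ) + 9 * (n : ℚ)^2 + 3 * 1 = 2 * (n : ℚ)^3 + 10 * (n : ℚ) := by
      exact_mod_cast congrArg (fun x : ℕ => (x : ℚ)) hcount
    linarith
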